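/- There exist an alphabet Σ and initialized VASS V' and V'' over Σ such that L(V') ∩ L(V'') = ∅ and yet L(V') and L(V'') are not regularly separable, i.e., no regular language R satisfies L(V') ⊆ R and R ∩ L(V'') = ∅. -/

import Mathlib

set_option linter.unusedVariables false

/-! ### Alphabet, effects, Dyck languages -/

abbrev Sig (n : ℕ) := Fin n × Bool

def letterEff {n : ℕ} (a : Sig n) : Fin n → ℤ :=
  fun j => if j = a.1 then (if a.2 then 1 else -1) else 0

def wordEff {n : ℕ} (w : List (Sig n)) : Fin n → ℤ :=
  (w.map letterEff).sum

/-- The Dyck language `D_n`. -/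
def Dyck (n : ℕ) : Language (Sig n) :=
  {w | wordEff w = 0 ∧ ∀ u, u <+: w → ∀ j, 0 ≤ wordEff u j}

/-- The coverability Dyck language `D_n^↑`. -/
def CovDyck (n : ℕ) : Language (Sig n) :=
  {w | ∀ u, u <+: w → ∀ j, 0 ≤ wordEff u j}

/-- The `ℤ`-Dyck language `D_n^ℤ`. -/
def ZDyck (n : ℕ) : Language (Sig n) :=
  {w | wordEff w = 0}

/-! ### VASS -/

structure VASS (A : Type) where
  Q : Type
  C : Type
  finQ : Finite Q
  finC : Finite C
  E : Set (Q × Option A × (C → ℤ) × Q)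
  finE : E.Finite

inductive VASS.NRun {A : Type} (V : VASS A) :
    (V.Q × (V.C → ℕ)) → List A → (V.Q × (V.C → ℕ)) → Prop
  | refl (cfg : V.Q × (V.C → ℕ)) : VASS.NRun V cfg [] cfg
  | step {q : V.Q} {c : V.C → ℕ} {a : Option A} {d : V.C → ℤ} {q' : V.Q}
      {c' : V.C → ℕ} {w : List A} {last : V.Q × (V.C → ℕ)} :
      (q, a, d, q') ∈ V.E →
      (∀ j, (c' j : ℤ) = (c j : ℤ) + d j) →
      VASS.NRun V (q', c') w last →
      VASS.NRun V (q, c) (a.toList ++ w) last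

/-- An initialized VASS: generalized initial/final configurations,
with `none` playing the role of `ω`. -/
structure InitVASS (A : Type) extends VASS A where
  qin : Q
  qout : Q
  cin : C → Option ℕ
  cout : C → Option ℕ

/-- The reachability language of an initialized VASS. -/
def InitVASS.lang {A : Type} (V : InitVASS A) : Language A :=
  {w | ∃ c0 cl : V.C → ℕ,
      V.toVASS.NRun (V.qin, c0) w (V.qout, cl) ∧
      (∀ j m, V.cin j = some m → c0 j = m) ∧
      (∀ j m, V.cout j = some m → cl j = m)}

/-! ### Transducers -/

structure Transducer (G A : Type) where
  Q : Type
  finQ : Finite Q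
  start : Q
  accept : Set Q
  trans : Set (Q × (Option G × Option A) × Q)
  finT : trans.Finite

inductive Transducer.Path {G A : Type} (T : Transducer G A) :
    T.Q → List G → List A → T.Q → Prop
  | refl (q : T.Q) : Transducer.Path T q [] [] q
  | step {q q' qf : T.Q} {g : Option G} {a : Option A} {u : List G} {v : List A} :
      (q, (g, a), q') ∈ T.trans →
      Transducer.Path T q' u v qf →
      Transducer.Path T q (g.toList ++ u) (a.toList ++ v) qf

/-- The relation recognized by a transducer. -/
def Transducer.rel {G A : Type} (T : Transducer G A) (u : List G) (v : List A) : Prop :=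
  ∃ qf ∈ T.accept, T.Path T.start u v qf

/-- `T⁻¹(L)`. -/
def Transducer.invImage {G A : Type} (T : Transducer G A) (L : Language A) : Language G :=
  {u | ∃ v ∈ L, T.rel u v}

/-! ### Regular separability -/

def RegSep {A : Type} (L1 L2 : Language A) : Prop :=
  ∃ R : Language A, R.IsRegular ∧ L1 ≤ R ∧ ∀ w ∈ R, w ∉ L2

/-! ### Linear sets and regular approximations -/

structure LinSet (n : ℕ) where
  base : Fin n → ℤ
  periods : Set (Fin n → ℤ)
  finP : periods.Finite

def LinSet.toSet {n : ℕ} (L : LinSet n) : Set (Fin n → ℤ) :=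
  {x | ∃ p ∈ AddSubmonoid.closure L.periods, x = L.base + p}

def inBox {n : ℕ} (k : ℕ) (x : Fin n → ℤ) : Prop :=
  ∀ j, -(k : ℤ) ≤ x j ∧ x j ≤ (k : ℤ)

/-- Reachability in the ε-NFA underlying the `k`-th regular approximation of `L`:
states are vectors in `[-k,k]^n`, letters move by their effect, ε-transitions
subtract a period. -/
inductive KReach {n : ℕ} (L : LinSet n) (k : ℕ) :
    (Fin n → ℤ) → List (Sig n) → (Fin n → ℤ) → Prop
  | refl (x : Fin n → ℤ) (h : inBox k x) : KReach L k x [] x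
  | letter {x y : Fin n → ℤ} {w : List (Sig n)} (a : Sig n)
      (h : inBox k x) (h' : inBox k (x + letterEff a)) :
      KReach L k (x + letterEff a) w y → KReach L k x (a :: w) y
  | eps {x y : Fin n → ℤ} {w : List (Sig n)} {p : Fin n → ℤ}
      (hp : p ∈ L.periods) (h : inBox k x) (h' : inBox k (x - p)) :
      KReach L k (x - p) w y → KReach L k x w y

/-- The `k`-th regular approximation `K^k(L)`. -/
def KApprox {n : ℕ} (L : LinSet n) (k : ℕ) : Language (Sig n) :=
  {w | ∃ y, KReach L k 0 w y ∧ y ∈ L.toSet}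

/-! ### The `⊕⁺` operation and the families `R_ℓ` -/

def posPlus {n : ℕ} (K L : Set (Fin n → ℤ)) : Set (Fin n → ℤ) :=
  {x | (∀ j, 0 ≤ x j) ∧ ∃ a ∈ K, (∀ j, 0 ≤ a j) ∧ ∃ b ∈ L, x = a + b}

def posFoldAux {n : ℕ} : Set (Fin n → ℤ) → List (Set (Fin n → ℤ)) → Set (Fin n → ℤ)
  | S, [] => S
  | S, L :: Ls => posFoldAux (posPlus S L) Ls

/-- `posFold [L₁, …, L_ℓ] = L₁ ⊕⁺ ⋯ ⊕⁺ L_ℓ` (associated to the left); for `ℓ = 1`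
it is `L₁` itself. -/
def posFold {n : ℕ} : List (Set (Fin n → ℤ)) → Set (Fin n → ℤ)
  | [] => ∅
  | L :: Ls => posFoldAux L Ls

/-- The family `R_ℓ`. -/
def RFam (n ℓ : ℕ) : Set (Language (Sig n)) :=
  {K | ∃ (k : ℕ) (Ls : List (LinSet n)), Ls.length = ℓ ∧
      (0 : Fin n → ℤ) ∉ posFold (Ls.map LinSet.toSet) ∧
      K = (Ls.map (fun L => KApprox L k)).prod}

/-- `R_{≤ m} = ⋃_{1 ≤ i ≤ m} R_i`. -/
def RleFam (n m : ℕ) : Set (Language (Sig n)) :=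
  ⋃ i ∈ Set.Icc 1 m, RFam n i

/-- `R = ⋃_{ℓ ≥ 1} R_ℓ`. -/
def RAll (n : ℕ) : Set (Language (Sig n)) :=
  ⋃ i ∈ Set.Ici 1, RFam n i

/-! ### Basic separator sets -/

def IsBasicSepSet {n : ℕ} (S : Language (Sig n)) (B : Set (Language (Sig n))) : Prop :=
  (∀ K ∈ B, K.IsRegular ∧ ∀ w ∈ K, w ∉ S) ∧
  (∀ L : Language (Sig n), L.IsRegular → (∀ w ∈ L, w ∉ S) →
    ∃ F ⊆ B, F.Finite ∧ ∀ w ∈ L, ∃ K ∈ F, w ∈ K)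

/-! Extra defs for specific statements -/

/-- `u ∼_A v`: the words induce the same state transformation in the DFA `M`. -/
def simEq {α σ : Type} (M : DFA α σ) (u v : List α) : Prop :=
  ∀ p : σ, M.evalFrom p u = M.evalFrom p v

/-- Assemble `w₀ m₁ w₁ ⋯ m_k w_k` over `Σ ⊎ Σ#` (`Sum.inl` = plain, `Sum.inr` = marked). -/
def assemble {α : Type} : List (List α) → List α → List (α ⊕ α)
  | [], _ => []
  | w :: _, [] => w.map Sum.inl
  | w :: ws, m :: ms => w.map Sum.inl ++ Sum.inr m :: assemble ws ms

/-- The set of effects of a language. -/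
def effSet {n : ℕ} (L : Language (Sig n)) : Set (Fin n → ℤ) :=
  {v | ∃ w ∈ L, wordEff w = v}

/-- `Mod(μ, v)`. -/
def ModLang (n μ : ℕ) (v : Fin n → ℤ) : Language (Sig n) :=
  {w | ∀ j, wordEff w j ≡ v j [ZMOD (μ : ℤ)]}

/-- `ModSet(μ, v)`: base `v`, periods `{±μ·e_i}`. -/
def ModSet (n μ : ℕ) (v : Fin n → ℤ) : LinSet n where
  base := v
  periods := (Set.range fun i : Fin n => (μ : ℤ) • Pi.single i (1 : ℤ)) ∪
    (Set.range fun i : Fin n => -((μ : ℤ) • Pi.single i (1 : ℤ)))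
  finP := (Set.finite_range _).union (Set.finite_range _)

/-- `Cov(k, i)`. -/
def CovLang (n k : ℕ) (i : Fin n) : Language (Sig n) :=
  {x | ∃ w w', x = w ++ w' ∧ wordEff w i < 0 ∧
      ∀ u, u <+: w → u ≠ w → 0 ≤ wordEff u i ∧ wordEff u i ≤ (k : ℤ)}

/-- `L_{neg,i}`: base `-e_i`, periods `{±e_j : j ≠ i}`. -/
def LNeg (n : ℕ) (i : Fin n) : LinSet n where
  base := -Pi.single i 1
  periods := ((fun j : Fin n => Pi.single j (1 : ℤ)) '' {j | j ≠ i}) ∪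
    ((fun j : Fin n => -Pi.single j (1 : ℤ)) '' {j | j ≠ i})
  finP := ((Set.toFinite _).image _).union ((Set.toFinite _).image _)

/-- `Z`: base `0`, periods `{±e_j}`. -/
def ZSet (n : ℕ) : LinSet n where
  base := 0
  periods := (Set.range fun j : Fin n => Pi.single j (1 : ℤ)) ∪
    (Set.range fun j : Fin n => -Pi.single j (1 : ℤ))
  finP := (Set.finite_range _).union (Set.finite_range _)

/-! The language `C_ℓ` over `Σ₂` -/

def ltrA1 : Sig 2 := (0, true)
def ltrA2 : Sig 2 := (1, true)
def ltrB1 : Sig 2 := (0, false)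
def ltrB2 : Sig 2 := (1, false)

def fwdWord (j : ℕ) : List (Sig 2) := ltrA1 :: List.replicate j ltrA2
def bwdWord (j : ℕ) : List (Sig 2) := ltrB1 :: List.replicate j ltrB2

def segLang (j : ℕ) : Language (Sig 2) :=
  KStar.kstar ({fwdWord j, bwdWord j} : Language (Sig 2))

def aPlusLang : Language (Sig 2) :=
  {w | ∃ m : ℕ, 0 < m ∧ w = List.replicate m ltrA1}

def CLang (ℓ : ℕ) : Language (Sig 2) :=
  aPlusLang * ((List.range ℓ).map (fun j => segLang (j + 1))).prod


/-! ### Construction for stmt19 -/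

theorem VASS.NRun.append {A : Type} {V : VASS A} {c1 c2 c3 : V.Q × (V.C → ℕ)}
    {u v : List A} (h1 : V.NRun c1 u c2) (h2 : V.NRun c2 v c3) :
    V.NRun c1 (u ++ v) c3 := by
  induction h1 with
  | refl => simpa
  | step hE hc _ ih => rw [List.append_assoc]; exact VASS.NRun.step hE hc (ih h2)

def myV1 : InitVASS Bool where
  Q := Fin 2
  C := Unit
  finQ := inferInstance
  finC := inferInstance
  E := {(0, some true, fun _ => (1 : ℤ), 0), (0, none, fun _ => 0, 1),
        (1, some false, fun _ => -1, 1)}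
  finE := (Set.finite_singleton _).insert _ |>.insert _
  qin := 0
  qout := 1
  cin := fun _ => some 0
  cout := fun _ => some 0

def myV2 : InitVASS Bool where
  Q := Fin 3
  C := Unit
  finQ := inferInstance
  finC := inferInstance
  E := {(0, some true, fun _ => (1 : ℤ), 0), (0, none, fun _ => 0, 1),
        (1, some false, fun _ => -1, 1), (1, some false, fun _ => 0, 2),
        (2, some false, fun _ => 0, 2)}
  finE := ((((Set.finite_singleton _).insert _).insert _).insert _).insert _
  qin := 0
  qout := 2
  cin := fun _ => some 0
  cout := fun _ => some 0

attribute [reducible] myV1 myV2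

instance (i : ℕ) : OfNat myV1.Q i := inferInstanceAs (OfNat (Fin 2) i)
instance : DecidableEq myV1.Q := inferInstanceAs (DecidableEq (Fin 2))

lemma myV1_inv {cfg last : myV1.Q × (myV1.C → ℕ)} {w : List Bool}
    (h : myV1.toVASS.NRun cfg w last) (hl : last = (1, fun _ => 0)) :
    (w.count false : ℤ) = cfg.2 () + w.count true := by
  induction h with
  | refl cfg =>
    simp [hl]
  | @step q c a d q' c' w' last hE hc hrun ih =>
    have ih := ih hl
    simp only [myV1, Set.mem_insert_iff, Set.mem_singleton_iff, Prod.mk.injEq] at hE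
    have hc' := hc ()
    rcases hE with ⟨hq, ha, hd, hq'⟩ | ⟨hq, ha, hd, hq'⟩ | ⟨hq, ha, hd, hq'⟩ <;>
      subst ha <;> subst hd <;> subst hq' <;> subst hq <;>
      simp at hc' ih ⊢ <;> omega


instance (i : ℕ) : OfNat myV2.Q i := inferInstanceAs (OfNat (Fin 3) i)
instance : DecidableEq myV2.Q := inferInstanceAs (DecidableEq (Fin 3))

lemma myV2_inv {cfg last : myV2.Q × (myV2.C → ℕ)} {w : List Bool}
    (h : myV2.toVASS.NRun cfg w last) (hl : last = (2, fun _ => 0)) :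
    (w.count false : ℤ) ≥ cfg.2 () + w.count true + (if cfg.1 = 2 then 0 else 1) := by
  induction h with
  | refl cfg =>
    simp [hl]
  | @step q c a d q' c' w' last hE hc hrun ih =>
    have ih := ih hl
    simp only [myV2, Set.mem_insert_iff, Set.mem_singleton_iff, Prod.mk.injEq] at hE
    have hc' := hc ()
    rcases hE with ⟨hq, ha, hd, hq'⟩ | ⟨hq, ha, hd, hq'⟩ | ⟨hq, ha, hd, hq'⟩ |
        ⟨hq, ha, hd, hq'⟩ | ⟨hq, ha, hd, hq'⟩ <;>
      subst ha <;> subst hd <;> subst hq' <;> subst hq <;>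
      simp [show (0:myV2.Q) ≠ 2 from by decide, show (1:myV2.Q) ≠ 2 from by decide,
        show (2:myV2.Q) = 2 from rfl] at hc' ih ⊢ <;> omega

-- runs in V1
lemma myV1_runA : ∀ n m : ℕ, myV1.toVASS.NRun (0, fun _ => m)
    (List.replicate n true) (0, fun _ => m + n) := by
  intro n
  induction n with
  | zero => intro m; simpa using VASS.NRun.refl _
  | succ n ih =>
    intro m
    have e1 : ((0 : Fin 2), some true, fun _ => (1:ℤ), (0 : Fin 2)) ∈ myV1.E := by
      simp [myV1]
    have := VASS.NRun.step (c := fun _ => m) (c' := fun _ => m + 1) e1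
      (by intro j; push_cast <;> ring_nf) (ih (m + 1))
    simpa [List.replicate_succ, Nat.add_assoc, Nat.add_comm 1 n] using this

lemma myV1_runB : ∀ n : ℕ, myV1.toVASS.NRun (1, fun _ => n)
    (List.replicate n false) (1, fun _ => 0) := by
  intro n
  induction n with
  | zero => exact VASS.NRun.refl _
  | succ n ih =>
    have e3 : ((1 : Fin 2), some false, fun _ => (-1:ℤ), (1 : Fin 2)) ∈ myV1.E := by
      simp [myV1]
    have := VASS.NRun.step (c := fun _ => n + 1) (c' := fun _ => n) e3
      (by intro j; push_cast <;> ring_nf) ih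
    simpa [List.replicate_succ] using this

lemma myV1_mem (n : ℕ) :
    List.replicate n true ++ List.replicate n false ∈ myV1.lang := by
  refine ⟨fun _ => 0, fun _ => 0, ?_, fun j m hm => Option.some_inj.mp hm,
    fun j m hm => Option.some_inj.mp hm⟩
  have e2 : ((0 : Fin 2), none, fun _ => (0:ℤ), (1 : Fin 2)) ∈ myV1.E := by
    simp [myV1]
  have hb : myV1.toVASS.NRun (0, fun _ => n) (List.replicate n false) (1, fun _ => 0) := by
    have := VASS.NRun.step (c := fun _ => n) (c' := fun _ => n) e2
      (by intro j; push_cast <;> ring_nf) (myV1_runB n)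
    simpa using this
  have ha := myV1_runA n 0
  rw [show (fun _ : myV1.C => 0 + n) = fun _ => n from funext fun _ => Nat.zero_add n] at ha
  exact ha.append hb

lemma myV2_runA : ∀ n m : ℕ, myV2.toVASS.NRun (0, fun _ => m)
    (List.replicate n true) (0, fun _ => m + n) := by
  intro n
  induction n with
  | zero => intro m; simpa using VASS.NRun.refl _
  | succ n ih =>
    intro m
    have e1 : ((0 : Fin 3), some true, fun _ => (1:ℤ), (0 : Fin 3)) ∈ myV2.E := by
      simp [myV2]
    have := VASS.NRun.step (c := fun _ => m) (c' := fun _ => m + 1) e1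
      (by intro j; push_cast <;> ring_nf) (ih (m + 1))
    simpa [List.replicate_succ, Nat.add_assoc, Nat.add_comm 1 n] using this

lemma myV2_runB : ∀ n : ℕ, myV2.toVASS.NRun (1, fun _ => n)
    (List.replicate n false) (1, fun _ => 0) := by
  intro n
  induction n with
  | zero => exact VASS.NRun.refl _
  | succ n ih =>
    have e3 : ((1 : Fin 3), some false, fun _ => (-1:ℤ), (1 : Fin 3)) ∈ myV2.E := by
      simp [myV2]
    have := VASS.NRun.step (c := fun _ => n + 1) (c' := fun _ => n) e3
      (by intro j; push_cast <;> ring_nf) ih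
    simpa [List.replicate_succ] using this

lemma myV2_runC : ∀ j : ℕ, myV2.toVASS.NRun (2, fun _ => 0)
    (List.replicate j false) (2, fun _ => 0) := by
  intro j
  induction j with
  | zero => exact VASS.NRun.refl _
  | succ j ih =>
    have e5 : ((2 : Fin 3), some false, fun _ => (0:ℤ), (2 : Fin 3)) ∈ myV2.E := by
      simp [myV2]
    have := VASS.NRun.step (c := fun _ => 0) (c' := fun _ => 0) e5
      (by intro j; push_cast <;> ring_nf) ih
    simpa [List.replicate_succ] using this

lemma myV2_mem {n m : ℕ} (h : n < m) :
    List.replicate n true ++ List.replicate m false ∈ myV2.lang := by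
  refine ⟨fun _ => 0, fun _ => 0, ?_, fun j m hm => Option.some_inj.mp hm,
    fun j m hm => Option.some_inj.mp hm⟩
  obtain ⟨j, rfl⟩ : ∃ j, m = n + 1 + j := ⟨m - n - 1, by omega⟩
  have e2 : ((0 : Fin 3), none, fun _ => (0:ℤ), (1 : Fin 3)) ∈ myV2.E := by
    simp [myV2]
  have e4 : ((1 : Fin 3), some false, fun _ => (0:ℤ), (2 : Fin 3)) ∈ myV2.E := by
    simp [myV2]
  have h4 : myV2.toVASS.NRun (1, fun _ => 0) (false :: List.replicate j false)
      (2, fun _ => 0) := by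
    have := VASS.NRun.step (c := fun _ => 0) (c' := fun _ => 0) e4
      (by intro j; push_cast <;> ring_nf) (myV2_runC j)
    simpa using this
  have hb : myV2.toVASS.NRun (1, fun _ => n)
      (List.replicate n false ++ (false :: List.replicate j false)) (2, fun _ => 0) :=
    (myV2_runB n).append h4
  have hab : myV2.toVASS.NRun (0, fun _ => n)
      (List.replicate n false ++ (false :: List.replicate j false)) (2, fun _ => 0) := by
    have := VASS.NRun.step (c := fun _ => n) (c' := fun _ => n) e2
      (by intro j; push_cast <;> ring_nf) hb
    simpa using this
  have ha := myV2_runA n 0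
  rw [show (fun _ : myV2.C => 0 + n) = fun _ => n from funext fun _ => Nat.zero_add n] at ha
  have := ha.append hab
  have hrep : List.replicate n false ++ (false :: List.replicate j false) =
      List.replicate (n + 1 + j) false := by
    rw [List.replicate_add, List.replicate_add]
    simp [List.replicate_succ]
  rw [hrep] at this
  simpa using this

lemma myV1_char {w : List Bool} (hw : w ∈ myV1.lang) :
    (w.count false : ℤ) = w.count true := by
  obtain ⟨c0, cl, hrun, hin, hout⟩ := hw
  have h0 : c0 = fun _ => 0 := funext fun j => hin j 0 rfl
  have hl : cl = fun _ => 0 := funext fun j => hout j 0 rfl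
  subst h0 hl
  have := myV1_inv hrun rfl
  simpa using this

lemma myV2_char {w : List Bool} (hw : w ∈ myV2.lang) :
    (w.count true : ℤ) < w.count false := by
  obtain ⟨c0, cl, hrun, hin, hout⟩ := hw
  have h0 : c0 = fun _ => 0 := funext fun j => hin j 0 rfl
  have hl : cl = fun _ => 0 := funext fun j => hout j 0 rfl
  subst h0 hl
  have h2 := myV2_inv hrun rfl
  simp [show myV2.qin ≠ 2 from by decide] at h2
  omega

theorem stmt19 : ∃ (A : Type) (_ : Finite A) (V1 V2 : InitVASS A),
    (∀ w ∈ V1.lang, w ∉ V2.lang) ∧ ¬ RegSep V1.lang V2.lang := by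
  refine ⟨Bool, inferInstance, myV1, myV2, ?_, ?_⟩
  · intro w h1 h2
    have := myV1_char h1
    have := myV2_char h2
    omega
  · rintro ⟨R, ⟨σ, hfin, M, hM⟩, hsub, hdisj⟩
    set k := Fintype.card σ with hk
    have key : ∀ i j : Fin (k + 1), (i : ℕ) < (j : ℕ) →
        M.eval (List.replicate k true ++ List.replicate (i : ℕ) false) =
          M.eval (List.replicate k true ++ List.replicate (j : ℕ) false) → False := by
      intro i j hij heq
      have hik : (i : ℕ) ≤ k := by omega
      have hRk : List.replicate k true ++ List.replicate k false ∈ M.accepts := by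
        rw [hM]; exact hsub (myV1_mem k)
      rw [DFA.mem_accepts] at hRk
      have hsplit : List.replicate k true ++ List.replicate k false =
          (List.replicate k true ++ List.replicate (i : ℕ) false) ++
            List.replicate (k - i) false := by
        rw [List.append_assoc, ← List.replicate_add]
        congr 2
        omega
      rw [hsplit, DFA.eval, DFA.evalFrom_of_append, ← DFA.eval] at hRk
      rw [heq, DFA.eval, ← DFA.evalFrom_of_append] at hRk
      have hacc : List.replicate k true ++ List.replicate ((j : ℕ) + (k - i)) false ∈
          M.accepts := by
        rw [DFA.mem_accepts]
        have h2 : (List.replicate k true ++ List.replicate (j : ℕ) false) ++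
            List.replicate (k - i) false =
            List.replicate k true ++ List.replicate ((j : ℕ) + (k - i)) false := by
          rw [List.append_assoc, ← List.replicate_add]
        rwa [h2] at hRk
      rw [hM] at hacc
      exact hdisj _ hacc (myV2_mem (by omega))
    have hcard : Fintype.card σ < Fintype.card (Fin (k + 1)) := by simp [k]
    obtain ⟨i, j, hne, heq⟩ := Fintype.exists_ne_map_eq_of_card_lt
      (fun i : Fin (k + 1) =>
        M.eval (List.replicate k true ++ List.replicate (i : ℕ) false)) hcard
    rcases lt_or_gt_of_ne (fun h : (i : ℕ) = (j : ℕ) => hne (Fin.ext h)) with h | h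
    · exact key i j h heq
    · exact key j i h heq.symm
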